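/- For finite n ≥ 3, the automorphism group of G(n,132) is isomorphic to ℤ/2ℤ, generated by the order-reversal map sending (x,y) to (n−1−y, n−1−x). -/

import Mathlib

/-- Vertices of `G(n,132)`: pairs of naturals `(x, y)` with `x < y < n`. -/
abbrev FV (n : ℕ) := {p : ℕ × ℕ // p.1 < p.2 ∧ p.2 < n}

/-- The shift graph `G(n, 132)` for finite `n`. -/
def FG132 (n : ℕ) : SimpleGraph (FV n) where
  Adj a b := a.val.2 = b.val.1 ∨ b.val.2 = a.val.1
  symm := ⟨fun a b h => Or.symm h⟩
  loopless := ⟨fun a h => by rcases h with h | h <;> exact a.prop.1.ne' h⟩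

noncomputable instance (n : ℕ) : Fintype (FV n) :=
  Fintype.ofInjective (fun v : FV n => ((⟨v.1.1, v.2.1.trans v.2.2⟩ : Fin n), (⟨v.1.2, v.2.2⟩ : Fin n)))
    (by rintro ⟨⟨a,b⟩,_⟩ ⟨⟨c,d⟩,_⟩ h; simp [Prod.ext_iff, Fin.ext_iff] at h; simp [h.1, h.2])

instance (n : ℕ) : DecidableRel (FG132 n).Adj := fun a b =>
  inferInstanceAs (Decidable (_ ∨ _))

lemma adj_iff {n : ℕ} (a b : FV n) : (FG132 n).Adj a b ↔ (a.val.2 = b.val.1 ∨ b.val.2 = a.val.1) := Iff.rfl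

lemma FG_degree {n : ℕ} (v : FV n) : (FG132 n).degree v = (n - 1 - v.val.2) + v.val.1 := by
  classical
  obtain ⟨⟨x, y⟩, hxy, hyn⟩ := v
  simp only at hxy hyn
  show _ = (n - 1 - y) + x
  rw [← SimpleGraph.card_neighborFinset_eq_degree]
  rw [← Finset.card_image_of_injective _ (Subtype.val_injective)]
  have himg : ((FG132 n).neighborFinset ⟨(x,y), hxy, hyn⟩).image Subtype.val
      = (Finset.Ioo y n).image (fun z => (y, z)) ∪ (Finset.range x).image (fun w => (w, x)) := by
    ext ⟨a, b⟩
    simp only [Finset.mem_image, SimpleGraph.mem_neighborFinset, Finset.mem_union,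
      Finset.mem_Ioo, Finset.mem_range, adj_iff, Prod.mk.injEq]
    constructor
    · rintro ⟨⟨⟨c,d⟩, hcd, hdn⟩, hadj, hv⟩
      simp only [Prod.mk.injEq] at hv hadj
      obtain ⟨rfl, rfl⟩ := hv
      simp only at hcd hdn
      rcases hadj with h | h
      · left; exact ⟨d, ⟨by omega, hdn⟩, by omega, rfl⟩
      · right; exact ⟨c, by omega, rfl, by omega⟩
    · rintro (⟨z, ⟨hz1, hz2⟩, rfl, rfl⟩ | ⟨w, hw, rfl, rfl⟩)
      · exact ⟨⟨(y, z), by constructor <;> simpa⟩, by simp, rfl⟩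
      · exact ⟨⟨(w, x), by constructor <;> simp <;> omega⟩, by simp, rfl⟩
  rw [himg, Finset.card_union_of_disjoint, Finset.card_image_of_injective,
    Finset.card_image_of_injective, Nat.card_Ioo, Finset.card_range]
  · omega
  · intro a b h; simpa using h
  · intro a b h; simp at h; omega
  · simp only [Finset.disjoint_left, Finset.mem_image]
    rintro ⟨a, b⟩ ⟨z, hz, rfl, rfl⟩ ⟨w, hw, h1, h2⟩
    simp at hz hw
    omega

def riso (n : ℕ) : FG132 n ≃g FG132 n where
  toFun v := ⟨(n - 1 - v.val.2, n - 1 - v.val.1), by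
    obtain ⟨⟨x,y⟩,hx,hy⟩ := v; simp only at *; constructor <;> omega⟩
  invFun v := ⟨(n - 1 - v.val.2, n - 1 - v.val.1), by
    obtain ⟨⟨x,y⟩,hx,hy⟩ := v; simp only at *; constructor <;> omega⟩
  left_inv v := by
    obtain ⟨⟨x,y⟩,hx,hy⟩ := v; simp only at *
    exact Subtype.ext (Prod.ext_iff.mpr ⟨by simp; omega, by simp; omega⟩)
  right_inv v := by
    obtain ⟨⟨x,y⟩,hx,hy⟩ := v; simp only at *
    exact Subtype.ext (Prod.ext_iff.mpr ⟨by simp; omega, by simp; omega⟩)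
  map_rel_iff' := by
    rintro ⟨⟨x,y⟩,hx,hy⟩ ⟨⟨a,b⟩,ha,hb⟩
    show (_ ∨ _) ↔ (_ ∨ _)
    simp only [Equiv.coe_fn_mk] at *
    constructor <;> rintro (h | h) <;> omega

lemma iso_degree {n : ℕ} (f : FG132 n ≃g FG132 n) (v : FV n) :
    (FG132 n).degree (f v) = (FG132 n).degree v := by
  classical
  rw [← SimpleGraph.card_neighborFinset_eq_degree, ← SimpleGraph.card_neighborFinset_eq_degree]
  have : (FG132 n).neighborFinset (f v) = ((FG132 n).neighborFinset v).image f := by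
    ext w
    simp only [SimpleGraph.mem_neighborFinset, Finset.mem_image]
    constructor
    · intro h
      refine ⟨f.symm w, ?_, by simp⟩
      have := f.map_adj_iff (v := v) (w := f.symm w)
      rw [RelIso.apply_symm_apply] at this
      exact this.mp h
    · rintro ⟨u, hu, rfl⟩
      exact f.map_adj_iff.mpr hu
  rw [this]
  exact Finset.card_image_of_injective _ (Equiv.injective f.toEquiv)

/-- path vertex `(i, i+1)`, with junk value if out of range. -/
def ev (n : ℕ) (hn : 3 ≤ n) (i : ℕ) : FV n :=
  if h : i + 1 < n then ⟨(i, i + 1), Nat.lt_succ_self i, h⟩ else ⟨(0, 1), Nat.zero_lt_one, by omega⟩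

lemma ev_val {n : ℕ} (hn : 3 ≤ n) {i : ℕ} (h : i + 1 < n) : (ev n hn i).val = (i, i + 1) := by
  simp [ev, h]

lemma riso_apply {n : ℕ} (v : FV n) :
    (riso n v).val = (n - 1 - v.val.2, n - 1 - v.val.1) := rfl

lemma riso_ev {n : ℕ} (hn : 3 ≤ n) {i : ℕ} (h : i + 1 < n) :
    riso n (ev n hn i) = ev n hn (n - 2 - i) := by
  apply Subtype.ext
  rw [riso_apply, ev_val hn h, ev_val hn (by omega)]
  simp only [Prod.mk.injEq]
  omega

lemma riso_invol {n : ℕ} (v : FV n) : riso n (riso n v) = v := by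
  obtain ⟨⟨x, y⟩, hx, hy⟩ := v
  apply Subtype.ext
  rw [riso_apply, riso_apply]
  simp only at hx hy
  simp only [Prod.mk.injEq]
  constructor <;> omega

/-- image of a path vertex under an automorphism is a path vertex -/
lemma path_to_path {n : ℕ} (hn : 3 ≤ n) (f : FG132 n ≃g FG132 n) {i : ℕ} (h : i + 1 < n) :
    ∃ j, j + 1 < n ∧ f (ev n hn i) = ev n hn j := by
  have hd : (FG132 n).degree (f (ev n hn i)) = n - 2 := by
    rw [iso_degree, FG_degree, ev_val hn h]
    simp only
    omega
  rw [FG_degree] at hd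
  set w := f (ev n hn i) with hw
  obtain ⟨⟨p, q⟩, hpq, hqn⟩ := w
  simp only at hpq hqn hd
  refine ⟨p, by omega, ?_⟩
  apply Subtype.ext
  rw [ev_val hn (by omega)]
  show (p, q) = (p, p + 1)
  exact Prod.ext rfl (by simp only; omega)

lemma path_perm (m : ℕ) (hm : 2 ≤ m) (σ : ℕ → ℕ)
    (hb : ∀ i, i < m → σ i < m)
    (hadj : ∀ i, i < m → ∀ j, j < m →
      ((σ j = σ i + 1 ∨ σ i = σ j + 1) ↔ (j = i + 1 ∨ i = j + 1)))
    (hinj : ∀ i, i < m → ∀ j, j < m → σ i = σ j → i = j)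
    (hsurj : ∀ j, j < m → ∃ i, i < m ∧ σ i = j) :
    (∀ i, i < m → σ i = i) ∨ (∀ i, i < m → σ i = m - 1 - i) := by
  have h0 : σ 0 = 0 ∨ σ 0 = m - 1 := by
    by_contra hc
    push_neg at hc
    have h1 : 1 ≤ σ 0 := by have := hb 0 (by omega); omega
    have h2 : σ 0 + 1 ≤ m - 1 := by have := hb 0 (by omega); omega
    obtain ⟨a, ha, hva⟩ := hsurj (σ 0 - 1) (by omega)
    obtain ⟨b, hbb, hvb⟩ := hsurj (σ 0 + 1) (by omega)
    have ha1 : a = 1 := by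
      have := (hadj 0 (by omega) a ha).mp (by omega)
      omega
    have hb1 : b = 1 := by
      have := (hadj 0 (by omega) b hbb).mp (by omega)
      omega
    rw [ha1] at hva
    rw [hb1] at hvb
    omega
  -- step lemma by strong induction
  rcases h0 with h0 | h0
  · left
    intro i hi
    induction i using Nat.strong_induction_on with
    | _ i ih =>
      match i, hi with
      | 0, _ => exact h0
      | 1, h1 =>
        have := (hadj 0 (by omega) 1 h1).mpr (by omega)
        omega
      | (k+2), hk =>
        have e1 : σ (k+1) = k+1 := ih (k+1) (by omega) (by omega)
        have e0 : σ k = k := ih k (by omega) (by omega)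
        have := (hadj (k+1) (by omega) (k+2) hk).mpr (by omega)
        rcases this with h | h
        · omega
        · exfalso
          have : k + 2 = k := hinj (k+2) hk k (by omega) (by omega)
          omega
  · right
    intro i hi
    induction i using Nat.strong_induction_on with
    | _ i ih =>
      match i, hi with
      | 0, _ => simpa using h0
      | 1, h1 =>
        have := (hadj 0 (by omega) 1 h1).mpr (by omega)
        have := hb 1 h1
        omega
      | (k+2), hk =>
        have e1 : σ (k+1) = m - 1 - (k+1) := ih (k+1) (by omega) (by omega)
        have e0 : σ k = m - 1 - k := ih k (by omega) (by omega)
        have := (hadj (k+1) (by omega) (k+2) hk).mpr (by omega)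
        rcases this with h | h
        · exfalso
          have : k + 2 = k := hinj (k+2) hk k (by omega) (by omega)
          omega
        · omega

lemma fix_all {n : ℕ} (hn : 3 ≤ n) (f : FG132 n ≃g FG132 n)
    (hf : ∀ i, i + 1 < n → f (ev n hn i) = ev n hn i) :
    ∀ v, f v = v := by
  classical
  -- unique common neighbor of e_(x-1) and e_y is (x,y)
  have ucn : ∀ (x y : ℕ), 1 ≤ x → x < y → y + 1 < n → ∀ (w : FV n),
      (FG132 n).Adj w (ev n hn (x-1)) → (FG132 n).Adj w (ev n hn y) →
      w.val = (x, y) := by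
    intro x y hx hxy hy w h1 h2
    obtain ⟨⟨a, b⟩, hab, hbn⟩ := w
    rw [adj_iff] at h1 h2
    rw [ev_val hn (show (x-1) + 1 < n by omega)] at h1
    rw [ev_val hn (show y + 1 < n from hy)] at h2
    simp only at h1 h2 hab hbn
    show (a, b) = (x, y)
    have : a = x ∧ b = y := by omega
    rw [this.1, this.2]
  -- interior vertices (tail ≥ 1, head ≤ n-2) are fixed
  have interior : ∀ (v : FV n), 1 ≤ v.val.1 → v.val.2 + 1 < n → f v = v := by
    intro v ha hb
    have hab := v.prop.1
    have adj1 : (FG132 n).Adj v (ev n hn (v.val.1 - 1)) := by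
      rw [adj_iff, ev_val hn (show (v.val.1 - 1) + 1 < n by omega)]
      right; show v.val.1 - 1 + 1 = v.val.1; omega
    have adj2 : (FG132 n).Adj v (ev n hn v.val.2) := by
      rw [adj_iff, ev_val hn hb]
      left; rfl
    have h1 := f.map_adj_iff.mpr adj1
    rw [hf (v.val.1 - 1) (by omega)] at h1
    have h2 := f.map_adj_iff.mpr adj2
    rw [hf v.val.2 hb] at h2
    have := ucn v.val.1 v.val.2 ha hab hb _ h1 h2
    exact Subtype.ext (this.trans rfl)
  -- vertices (0, b) with 2 ≤ b ≤ n-2 are fixed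
  have zero : ∀ (v : FV n), v.val.1 = 0 → 2 ≤ v.val.2 → v.val.2 + 1 < n → f v = v := by
    intro v h0 hb2 hbn
    obtain ⟨⟨x, b⟩, hxb, hbn'⟩ := v
    simp only at h0 hb2 hbn hxb hbn'
    subst h0
    have adjb : (FG132 n).Adj (⟨(0, b), hxb, hbn'⟩ : FV n) (ev n hn b) := by
      rw [adj_iff, ev_val hn hbn]; left; rfl
    have h2 := f.map_adj_iff.mpr adjb
    rw [hf b hbn] at h2
    rcases hw : f ⟨(0, b), hxb, hbn'⟩ with ⟨⟨p, q⟩, hpq, hqn⟩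
    rw [hw] at h2
    rw [adj_iff, ev_val hn hbn] at h2
    simp only at h2 hpq hqn
    rcases h2 with hq | hp
    · -- q = b ; show p = 0
      rcases Nat.eq_zero_or_pos p with hp0 | hp1
      · apply Subtype.ext; show (p, q) = (0, b); rw [hp0, hq]
      · exfalso
        have hfix := interior ⟨(p, q), hpq, hqn⟩ hp1 (by simp only; omega)
        have heq : (⟨(p, q), hpq, hqn⟩ : FV n) = ⟨(0, b), hxb, hbn'⟩ :=
          f.injective (hfix.trans hw.symm)
        have := congrArg Subtype.val heq
        rw [Prod.ext_iff] at this
        simp only at this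
        omega
    · -- p = b + 1
      exfalso
      by_cases hq2 : q + 1 < n
      · have hfix := interior ⟨(p, q), hpq, hqn⟩ (by simp only; omega) (by simp only; omega)
        have heq : (⟨(p, q), hpq, hqn⟩ : FV n) = ⟨(0, b), hxb, hbn'⟩ :=
          f.injective (hfix.trans hw.symm)
        have := congrArg Subtype.val heq
        rw [Prod.ext_iff] at this
        simp only at this
        omega
      · have hq3 : q = n - 1 := by omega
        by_cases hq4 : p + 1 = q
        · -- f v = ev p, a fixed path vertex
          have hevp : (⟨(p, q), hpq, hqn⟩ : FV n) = ev n hn p := by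
            apply Subtype.ext; rw [ev_val hn (by omega)]
            show (p, q) = (p, p + 1); rw [hq4]
          have heq : ev n hn p = (⟨(0, b), hxb, hbn'⟩ : FV n) :=
            f.injective ((hf p (by omega)).trans (hevp.symm.trans hw.symm))
          have := congrArg Subtype.val heq
          rw [ev_val hn (show p + 1 < n by omega)] at this
          simp only [Prod.mk.injEq] at this
          omega
        · -- q ≥ p + 2, so b + 3 ≤ n - 1 ; use interior vertex (b, b+2)
          have hb3 : b + 2 + 1 < n := by omega
          have hu := interior ⟨(b, b+2), by omega, by omega⟩ (by simp only; omega)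
            (by simp only; omega)
          have adju : (FG132 n).Adj (⟨(0, b), hxb, hbn'⟩ : FV n)
              ⟨(b, b+2), by omega, by omega⟩ := by rw [adj_iff]; left; rfl
          have h3 := f.map_adj_iff.mpr adju
          rw [hu, hw, adj_iff] at h3
          simp only at h3
          omega
  -- vertices (a, n-1) with 1 ≤ a ≤ n-3 are fixed
  have last : ∀ (v : FV n), 1 ≤ v.val.1 → v.val.1 + 2 < n → v.val.2 = n - 1 → f v = v := by
    intro v ha han hv2
    obtain ⟨⟨a, y⟩, hay, hyn⟩ := v
    simp only at ha han hv2 hay hyn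
    subst hv2
    have adja : (FG132 n).Adj (⟨(a, n-1), hay, hyn⟩ : FV n) (ev n hn (a-1)) := by
      rw [adj_iff, ev_val hn (by omega)]
      right; show a - 1 + 1 = a; omega
    have h1 := f.map_adj_iff.mpr adja
    rw [hf (a-1) (by omega)] at h1
    rcases hw : f ⟨(a, n-1), hay, hyn⟩ with ⟨⟨p, q⟩, hpq, hqn⟩
    rw [hw] at h1
    rw [adj_iff, ev_val hn (by omega)] at h1
    simp only at h1 hpq hqn
    rcases h1 with hq | hp
    · -- q = a - 1 : impossible
      exfalso
      rcases Nat.eq_zero_or_pos p with hp0 | hp1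
      · by_cases hq1 : q = 1
        · have hevp : (⟨(p, q), hpq, hqn⟩ : FV n) = ev n hn 0 := by
            apply Subtype.ext; rw [ev_val hn (by omega)]
            show (p, q) = (0, 1); rw [hp0, hq1]
          have heq : ev n hn 0 = (⟨(a, n-1), hay, hyn⟩ : FV n) :=
            f.injective ((hf 0 (by omega)).trans (hevp.symm.trans hw.symm))
          have := congrArg Subtype.val heq
          rw [ev_val hn (show 0 + 1 < n by omega)] at this
          simp only [Prod.mk.injEq] at this
          omega
        · have hfix := zero ⟨(p, q), hpq, hqn⟩ (by simp only; omega) (by simp only; omega)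
            (by simp only; omega)
          have heq : (⟨(p, q), hpq, hqn⟩ : FV n) = ⟨(a, n-1), hay, hyn⟩ :=
            f.injective (hfix.trans hw.symm)
          have := congrArg Subtype.val heq
          rw [Prod.ext_iff] at this
          simp only at this
          omega
      · have hfix := interior ⟨(p, q), hpq, hqn⟩ hp1 (by simp only; omega)
        have heq : (⟨(p, q), hpq, hqn⟩ : FV n) = ⟨(a, n-1), hay, hyn⟩ :=
          f.injective (hfix.trans hw.symm)
        have := congrArg Subtype.val heq
        rw [Prod.ext_iff] at this
        simp only at this
        omega
    · -- p = a
      by_cases hq2 : q + 1 < n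
      · exfalso
        have hfix := interior ⟨(p, q), hpq, hqn⟩ (by simp only; omega) (by simp only; omega)
        have heq : (⟨(p, q), hpq, hqn⟩ : FV n) = ⟨(a, n-1), hay, hyn⟩ :=
          f.injective (hfix.trans hw.symm)
        have := congrArg Subtype.val heq
        rw [Prod.ext_iff] at this
        simp only at this
        omega
      · apply Subtype.ext; show (p, q) = (a, n-1)
        have : p = a ∧ q = n - 1 := by omega
        rw [this.1, this.2]
  -- the isolated vertex (0, n-1) is fixed
  have isol : ∀ (v : FV n), v.val.1 = 0 → v.val.2 = n - 1 → f v = v := by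
    intro v h0 h1
    obtain ⟨⟨x, y⟩, hxy, hyn⟩ := v
    simp only at h0 h1 hxy hyn
    subst h0; subst h1
    have hno : ∀ u : FV n, ¬ (FG132 n).Adj (⟨(0, n-1), hxy, hyn⟩ : FV n) u := by
      rintro ⟨⟨c, d⟩, hcd, hdn⟩ h
      rw [adj_iff] at h
      simp only at h hcd hdn
      omega
    rcases hw : f ⟨(0, n-1), hxy, hyn⟩ with ⟨⟨p, q⟩, hpq, hqn⟩
    simp only at hpq hqn
    have hq : q = n - 1 := by
      by_contra hq
      have hqn' : q + 1 < n := by omega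
      have hadj : (FG132 n).Adj (f ⟨(0, n-1), hxy, hyn⟩) (ev n hn q) := by
        rw [hw, adj_iff, ev_val hn hqn']; left; rfl
      have h2 : (FG132 n).Adj (f ⟨(0, n-1), hxy, hyn⟩)
          (f (f.symm (ev n hn q))) := by rwa [RelIso.apply_symm_apply]
      exact hno _ (f.map_adj_iff.mp h2)
    have hp : p = 0 := by
      by_contra hp
      have hp1 : 1 ≤ p := by omega
      have hadj : (FG132 n).Adj (f ⟨(0, n-1), hxy, hyn⟩) (ev n hn (p-1)) := by
        rw [hw, adj_iff, ev_val hn (by omega)]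
        right; show p - 1 + 1 = p; omega
      have h2 : (FG132 n).Adj (f ⟨(0, n-1), hxy, hyn⟩)
          (f (f.symm (ev n hn (p-1)))) := by rwa [RelIso.apply_symm_apply]
      exact hno _ (f.map_adj_iff.mp h2)
    apply Subtype.ext; show (p, q) = (0, n-1); rw [hp, hq]
  -- assemble
  intro v
  have hxy := v.prop.1
  have hyn := v.prop.2
  by_cases h1 : v.val.2 + 1 < n
  · by_cases h2 : 1 ≤ v.val.1
    · exact interior v h2 h1
    · by_cases h3 : 2 ≤ v.val.2
      · exact zero v (by omega) h3 h1
      · -- v = (0, 1) = ev 0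
        have hev : v = ev n hn 0 := by
          apply Subtype.ext; rw [ev_val hn (by omega)]
          have : v.val = (v.val.1, v.val.2) := rfl
          rw [this]
          have : v.val.1 = 0 ∧ v.val.2 = 1 := by omega
          rw [this.1, this.2]
        rw [hev]; exact hf 0 (by omega)
  · by_cases h2 : 1 ≤ v.val.1
    · by_cases h3 : v.val.1 + 2 < n
      · exact last v h2 h3 (by omega)
      · -- v = (n-2, n-1) = ev (n-2)
        have hev : v = ev n hn (n-2) := by
          apply Subtype.ext; rw [ev_val hn (by omega)]
          have : v.val = (v.val.1, v.val.2) := rfl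
          rw [this]
          have : v.val.1 = n - 2 ∧ v.val.2 = n - 2 + 1 := by omega
          rw [this.1, this.2]
        rw [hev]; exact hf (n-2) (by omega)
    · exact isol v (by omega) (by omega)

/-- For finite `n ≥ 3` the automorphism group of `G(n,132)` is `ℤ/2ℤ`, generated by the
order-reversal map `(x,y) ↦ (n-1-y, n-1-x)`: that map is a nontrivial automorphism `r`,
and every automorphism equals the identity or `r`. -/
theorem stmt_14 (n : ℕ) (hn : 3 ≤ n) :
    ∃ r : FG132 n ≃g FG132 n,
      (∀ v : FV n, ((r v).val.1 = n - 1 - v.val.2 ∧ (r v).val.2 = n - 1 - v.val.1)) ∧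
      ¬ (∀ v, r v = v) ∧
      ∀ f : FG132 n ≃g FG132 n, (∀ v, f v = v) ∨ (∀ v, f v = r v) := by
  classical
  refine ⟨riso n, fun v => ⟨rfl, rfl⟩, ?_, ?_⟩
  · intro h
    have h0 := h (ev n hn 0)
    rw [riso_ev hn (show 0 + 1 < n by omega)] at h0
    have := congrArg Subtype.val h0
    rw [ev_val hn (show (n - 2 - 0) + 1 < n by omega), ev_val hn (show 0 + 1 < n by omega)]
      at this
    simp only [Prod.mk.injEq] at this
    omega
  · intro f
    set σ : ℕ → ℕ := fun i => (f (ev n hn i)).val.1 with hσ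
    have key : ∀ i, i + 1 < n → σ i + 1 < n ∧ f (ev n hn i) = ev n hn (σ i) := by
      intro i hi
      obtain ⟨j, hj, hfj⟩ := path_to_path hn f hi
      have hji : σ i = j := by show (f (ev n hn i)).val.1 = j; rw [hfj, ev_val hn hj]
      rw [hji]; exact ⟨hj, hfj⟩
    have hb : ∀ i, i < n - 1 → σ i < n - 1 := by
      intro i hi
      have := (key i (by omega)).1
      omega
    have evadj : ∀ i j, i + 1 < n → j + 1 < n →
        ((FG132 n).Adj (ev n hn i) (ev n hn j) ↔ (j = i + 1 ∨ i = j + 1)) := by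
      intro i j hi hj
      rw [adj_iff, ev_val hn hi, ev_val hn hj]
      simp only
      constructor <;> rintro (h | h) <;> omega
    have hadj : ∀ i, i < n - 1 → ∀ j, j < n - 1 →
        ((σ j = σ i + 1 ∨ σ i = σ j + 1) ↔ (j = i + 1 ∨ i = j + 1)) := by
      intro i hi j hj
      have h1 := (key i (by omega)).2
      have h2 := (key j (by omega)).2
      have hm := f.map_adj_iff (v := ev n hn i) (w := ev n hn j)
      rw [h1, h2] at hm
      rw [evadj (σ i) (σ j) (key i (by omega)).1 (key j (by omega)).1,
        evadj i j (by omega) (by omega)] at hm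
      exact hm
    have hinj : ∀ i, i < n - 1 → ∀ j, j < n - 1 → σ i = σ j → i = j := by
      intro i hi j hj hij
      have h1 := (key i (by omega)).2
      have h2 := (key j (by omega)).2
      have heq : f (ev n hn i) = f (ev n hn j) := by rw [h1, h2, hij]
      have := congrArg Subtype.val (f.injective heq)
      rw [ev_val hn (show i + 1 < n by omega), ev_val hn (show j + 1 < n by omega)] at this
      simp only [Prod.mk.injEq] at this
      exact this.1
    have hsurj : ∀ j, j < n - 1 → ∃ i, i < n - 1 ∧ σ i = j := by
      intro j hj
      obtain ⟨i, hi, hfi⟩ := path_to_path hn f.symm (show j + 1 < n by omega)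
      refine ⟨i, by omega, ?_⟩
      have hj' : f (ev n hn i) = ev n hn j := by rw [← hfi, RelIso.apply_symm_apply]
      show (f (ev n hn i)).val.1 = j
      rw [hj', ev_val hn (by omega)]
    rcases path_perm (n - 1) (by omega) σ hb hadj hinj hsurj with hid | hrev
    · left
      apply fix_all hn f
      intro i hi
      rw [(key i hi).2, hid i (by omega)]
    · right
      have hg : ∀ i, i + 1 < n → (RelIso.trans f (riso n)) (ev n hn i) = ev n hn i := by
        intro i hi
        rw [RelIso.trans_apply]
        rw [(key i hi).2, riso_ev hn (key i hi).1]
        congr 1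
        have := hrev i (by omega)
        omega
      have hfix := fix_all hn (RelIso.trans f (riso n)) hg
      intro v
      have h1 := hfix v
      rw [RelIso.trans_apply] at h1
      have h2 : riso n (riso n (f v)) = riso n v := congrArg _ h1
      rw [riso_invol] at h2
      exact h2
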